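/- Theorem (Γ-convergence of the Deep Ritz Method): In the Setting, assume Assumption (A1). Then the sequence of functionals (F_n^f) Γ-converges to F^f with respect to the weak topology of X, i.e.: (i) for every x ∈ X and every sequence (x_n) converging weakly to x, F^f(x) ≤ liminf_{n→∞} F_n^f(x_n); and (ii) for every x ∈ X there exists a sequence (x_n) converging weakly to x with F_n^f(x_n) → F^f(x). -/

import Mathlib

open Filter Topology
open scoped Classical

/-- Weak convergence of a sequence in a normed space: convergence tested against
every continuous linear functional. -/
def WeakTendsto {X : Type*} [NormedAddCommGroup X] [NormedSpace ℝ X]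
    (u : ℕ → X) (x : X) : Prop :=
  ∀ φ : X →L[ℝ] ℝ, Tendsto (fun n => φ (u n)) atTop (𝓝 (φ x))

/-- **Γ-convergence of the Deep Ritz Method.**
Under Assumption (A1), the penalized functionals `(Fn n)` Γ-converge to `F`
with respect to the weak topology of `X`: the liminf inequality holds along
every weakly convergent sequence, and every point admits a recovery sequence. -/
theorem deep_ritz_gamma_convergence
    {X B : Type*} [NormedAddCommGroup X] [NormedSpace ℝ X] [CompleteSpace X]
    [NormedAddCommGroup B] [NormedSpace ℝ B] [CompleteSpace B]
    (hXrefl : Function.Surjective (NormedSpace.inclusionInDoubleDual ℝ X))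
    (hBrefl : Function.Surjective (NormedSpace.inclusionInDoubleDual ℝ B))
    (γ : X →L[ℝ] B)
    (E : X → ℝ)
    -- E is bounded from below
    (hEbdd : ∃ m : ℝ, ∀ x : X, m ≤ E x)
    -- E is (sequentially) lower semicontinuous w.r.t. the weak topology of X
    (hElsc : ∀ (x : X) (u : ℕ → X), WeakTendsto u x →
      ((E x : EReal)) ≤ liminf (fun n => ((E (u n) : EReal))) atTop)
    -- E is continuous w.r.t. the norm topology of X
    (hEcont : Continuous E)
    (p : ℝ) (hp : 1 < p)
    (f : X →L[ℝ] ℝ)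
    (lam : ℕ → ℝ) (hlam_pos : ∀ n, 0 < lam n) (hlam : Tendsto lam atTop atTop)
    (A : ℕ → Set X)
    -- the penalized functionals
    (Fn : ℕ → X → EReal)
    (hFn : ∀ (n : ℕ) (x : X), Fn n x =
      if x ∈ A n then ((E x + lam n * ‖γ x‖ ^ p - f x : ℝ) : EReal) else ⊤)
    -- the limit functional
    (F : X → EReal)
    (hF : ∀ x : X, F x = if γ x = 0 then ((E x - f x : ℝ) : EReal) else ⊤)
    -- Assumption (A1)
    (hA1 : ∀ x : X, γ x = 0 → ∃ u : ℕ → X, (∀ n, u n ∈ A n) ∧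
      Tendsto u atTop (𝓝 x) ∧
      Tendsto (fun n => lam n * ‖γ (u n)‖ ^ p) atTop (𝓝 0)) :
    (∀ (x : X) (u : ℕ → X), WeakTendsto u x →
        F x ≤ liminf (fun n => Fn n (u n)) atTop) ∧
      (∀ x : X, ∃ u : ℕ → X, WeakTendsto u x ∧
        Tendsto (fun n => Fn n (u n)) atTop (𝓝 (F x))) := by
  obtain ⟨m, hm⟩ := hEbdd
  -- pointwise lower bound
  have key : ∀ n x, ((E x + lam n * ‖γ x‖ ^ p - f x : ℝ) : EReal) ≤ Fn n x := by
    intro n x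
    rw [hFn n x]
    split_ifs with h
    · exact le_refl _
    · exact le_top
  have pen_nonneg : ∀ n (x : X), 0 ≤ lam n * ‖γ x‖ ^ p := fun n x =>
    mul_nonneg (hlam_pos n).le (Real.rpow_nonneg (norm_nonneg _) p)
  constructor
  · -- liminf inequality
    intro x u hu
    by_cases hγ : γ x = 0
    · -- F x = E x - f x
      rw [hF, if_pos hγ]
      have h1 : ∀ n, ((E (u n) - f (u n) : ℝ) : EReal) ≤ Fn n (u n) := by
        intro n
        refine le_trans ?_ (key n (u n))
        exact_mod_cast by nlinarith [pen_nonneg n (u n)]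
      refine le_trans ?_ (liminf_le_liminf (Eventually.of_forall h1))
      have hsum : (fun n => ((E (u n) - f (u n) : ℝ) : EReal)) =
          (fun n => ((E (u n) : ℝ) : EReal)) + (fun n => ((-(f (u n)) : ℝ) : EReal)) := by
        funext n
        simp [sub_eq_add_neg, EReal.coe_add, EReal.coe_neg]
      rw [hsum]
      refine le_trans ?_ EReal.le_liminf_add
      have hf : Tendsto (fun n => ((-(f (u n)) : ℝ) : EReal)) atTop (𝓝 ((-(f x) : ℝ) : EReal)) := by
        exact (EReal.continuous_coe_iff.mpr continuous_id).continuousAt.tendsto.comp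
          ((hu f).neg) |>.congr (fun n => rfl)
      rw [hf.liminf_eq]
      calc ((E x - f x : ℝ) : EReal) = ((E x : ℝ) : EReal) + ((-(f x) : ℝ) : EReal) := by
            rw [← EReal.coe_add]; norm_num [sub_eq_add_neg]
        _ ≤ _ := add_le_add (hElsc x u hu) le_rfl
    · -- γ x ≠ 0 : liminf is ⊤
      rw [hF, if_neg hγ]
      have htop : Tendsto (fun n => Fn n (u n)) atTop (𝓝 ⊤) := by
        rw [EReal.tendsto_nhds_top_iff_real]
        intro r
        obtain ⟨ψ, hψ1, hψ2⟩ := exists_dual_vector ℝ (γ x) (norm_ne_zero_iff.mpr hγ)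
        set c := ‖γ x‖ / 2 with hc
        have hc0 : 0 < c := half_pos (norm_pos_iff.mpr hγ)
        -- eventually ‖γ (u n)‖ ≥ c
        have hψt : Tendsto (fun n => ψ (γ (u n))) atTop (𝓝 ‖γ x‖) := by
          have := hu (ψ.comp γ)
          simpa [hψ2] using this
        have hev1 : ∀ᶠ n in atTop, c ≤ ‖γ (u n)‖ := by
          filter_upwards [hψt.eventually_const_le (by linarith : c < ‖γ x‖)] with n hn
          calc c ≤ ψ (γ (u n)) := hn
            _ ≤ ‖ψ (γ (u n))‖ := le_abs_self _
            _ ≤ ‖ψ‖ * ‖γ (u n)‖ := ψ.le_opNorm _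
            _ = ‖γ (u n)‖ := by rw [hψ1, one_mul]
        have hev2 : ∀ᶠ n in atTop, f (u n) ≤ f x + 1 :=
          (hu f).eventually_le_const (by linarith)
        have hev3 : ∀ᶠ n in atTop, (r - m + f x + 1) / c ^ p < lam n :=
          hlam.eventually_gt_atTop _
        filter_upwards [hev1, hev2, hev3] with n h1 h2 h3
        refine lt_of_lt_of_le ?_ (key n (u n))
        rw [EReal.coe_lt_coe_iff]
        have hcp : 0 < c ^ p := Real.rpow_pos_of_pos hc0 p
        have h4 : lam n * c ^ p ≥ lam n * c ^ p := le_refl _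
        have h5 : c ^ p ≤ ‖γ (u n)‖ ^ p := Real.rpow_le_rpow hc0.le h1 (by linarith)
        have h6 : r - m + f x + 1 < lam n * c ^ p := by
          rw [div_lt_iff₀ hcp] at h3; linarith
        have h7 : lam n * c ^ p ≤ lam n * ‖γ (u n)‖ ^ p :=
          mul_le_mul_of_nonneg_left h5 (hlam_pos n).le
        have := hm (u n)
        linarith
      · rw [htop.liminf_eq]
  · -- recovery sequence
    intro x
    by_cases hγ : γ x = 0
    · obtain ⟨u, huA, hun, hupen⟩ := hA1 x hγ
      refine ⟨u, fun φ => (φ.continuous.tendsto x).comp hun, ?_⟩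
      rw [hF, if_pos hγ]
      have : Tendsto (fun n => (E (u n) + lam n * ‖γ (u n)‖ ^ p - f (u n) : ℝ)) atTop
          (𝓝 (E x - f x)) := by
        have h1 : Tendsto (fun n => E (u n)) atTop (𝓝 (E x)) :=
          (hEcont.tendsto x).comp hun
        have h2 : Tendsto (fun n => f (u n)) atTop (𝓝 (f x)) :=
          (f.continuous.tendsto x).comp hun
        have := (h1.add hupen).sub h2
        simpa using this
      have hcoe : Tendsto (fun n => ((E (u n) + lam n * ‖γ (u n)‖ ^ p - f (u n) : ℝ) : EReal))
          atTop (𝓝 ((E x - f x : ℝ) : EReal)) := by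
        exact_mod_cast EReal.tendsto_coe.mpr this
      refine hcoe.congr fun n => ?_
      rw [hFn, if_pos (huA n)]
    · -- constant sequence x
      refine ⟨fun _ => x, fun φ => tendsto_const_nhds, ?_⟩
      rw [hF, if_neg hγ]
      rw [EReal.tendsto_nhds_top_iff_real]
      intro r
      have hcp : 0 < ‖γ x‖ ^ p := Real.rpow_pos_of_pos (norm_pos_iff.mpr hγ) p
      have hev : ∀ᶠ n in atTop, (r - E x + f x) / ‖γ x‖ ^ p < lam n :=
        hlam.eventually_gt_atTop _
      filter_upwards [hev] with n hn
      refine lt_of_lt_of_le ?_ (key n x)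
      rw [EReal.coe_lt_coe_iff]
      rw [div_lt_iff₀ hcp] at hn
      linarith
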